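/- Let G and H be CDFs on [0,1] such that H is a mean-preserving spread of G. Then ∫₀¹ (1−G(x))² dx ≥ ∫₀¹ (1−H(x))² dx. Equivalently, the expected revenue of a second-price auction with no reserve price and two i.i.d. bidders (which equals the expected minimum of the two values) is minimized, over all signal distributions G of which the prior H is a mean-preserving spread, by full revelation G = H. -/

import Mathlib

open MeasureTheory Set

lemma key_nonneg (f w : ℝ → ℝ) (hf : Measurable f) (hfb : ∀ t, |f t| ≤ 1)
    (hw : Antitone w) (hw0 : ∀ t, 0 ≤ w t)
    (hF : ∀ x ∈ Icc (0:ℝ) 1, 0 ≤ ∫ t in Ioc (0:ℝ) x, f t) :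
    0 ≤ ∫ t in Ioc (0:ℝ) 1, f t * w t := by
  set μ : Measure ℝ := volume.restrict (Ioc (0:ℝ) 1) with hμ
  have hwm : Measurable w := hw.measurable
  set A : Set (ℝ × ℝ) := {p | 0 ≤ p.2 ∧ p.2 < w p.1} with hA
  have hAmeas : MeasurableSet A := by
    apply MeasurableSet.inter
    · exact measurableSet_le measurable_const measurable_snd
    · exact measurableSet_lt measurable_snd (hwm.comp measurable_fst)
  set g : ℝ × ℝ → ℝ := A.indicator (fun p => f p.1) with hg
  have hgmeas : Measurable g := (hf.comp measurable_fst).indicator hAmeas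
  have hslice : ∀ t s : ℝ, g (t, s) = (Ico (0:ℝ) (w t)).indicator (fun _ => f t) s := by
    intro t s
    simp only [hg, Set.indicator_apply, Set.mem_Ico, hA, Set.mem_setOf_eq]
  have hslicefun : ∀ t : ℝ, (fun s => g (t, s)) = (Ico (0:ℝ) (w t)).indicator (fun _ => f t) :=
    fun t => funext (hslice t)
  have hvol : ∀ t : ℝ, (volume (Ico (0:ℝ) (w t))).toReal = w t := by
    intro t
    rw [Real.volume_Ico, ENNReal.toReal_ofReal (by linarith [hw0 t])]
    ring
  have heq : ∀ t : ℝ, (∫ s, ‖g (t, s)‖) = |f t| * w t := by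
    intro t
    have hn : ∀ s : ℝ, ‖g (t, s)‖ = (Ico (0:ℝ) (w t)).indicator (fun _ => |f t|) s := by
      intro s
      rw [hslice t s]
      by_cases h : s ∈ Ico (0:ℝ) (w t) <;>
        simp [Set.indicator_of_mem, Set.indicator_of_notMem, h, Real.norm_eq_abs]
    simp_rw [hn]
    rw [integral_indicator_const _ measurableSet_Ico, smul_eq_mul, measureReal_def, hvol t]
    ring
  have hgint : Integrable g (μ.prod volume) := by
    rw [integrable_prod_iff hgmeas.aestronglyMeasurable]
    constructor
    · refine Filter.Eventually.of_forall (fun t => ?_)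
      rw [hslicefun t, integrable_indicator_iff measurableSet_Ico]
      exact integrableOn_const measure_Ico_lt_top.ne
    · simp only [heq]
      refine Integrable.mono' (g := fun _ => w 0) (integrable_const _) ?_ ?_
      · exact (hf.abs.mul hwm).aestronglyMeasurable
      · rw [hμ, ae_restrict_iff' measurableSet_Ioc]
        refine Filter.Eventually.of_forall (fun t ht => ?_)
        rw [Real.norm_eq_abs, abs_of_nonneg (mul_nonneg (abs_nonneg _) (hw0 t))]
        calc |f t| * w t ≤ 1 * w t := mul_le_mul_of_nonneg_right (hfb t) (hw0 t)
          _ = w t := one_mul _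
          _ ≤ w 0 := hw (le_of_lt ht.1)
  have hswap : (∫ t, ∫ s, g (t, s) ∂volume ∂μ) = ∫ s, ∫ t, g (t, s) ∂μ ∂volume :=
    integral_integral_swap (by exact hgint)
  have hleft : (∫ t, ∫ s, g (t, s) ∂volume ∂μ) = ∫ t in Ioc (0:ℝ) 1, f t * w t := by
    apply integral_congr_ae
    refine Filter.Eventually.of_forall (fun t => ?_)
    show (∫ s, g (t, s) ∂volume) = f t * w t
    rw [hslicefun t, integral_indicator_const _ measurableSet_Ico, smul_eq_mul, measureReal_def, hvol t]
    ring
  have hright : 0 ≤ ∫ s, ∫ t, g (t, s) ∂μ ∂volume := by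
    apply integral_nonneg
    intro s
    show (0:ℝ) ≤ ∫ t, g (t, s) ∂μ
    by_cases hs : 0 ≤ s
    · have hTs : MeasurableSet {t : ℝ | s < w t} := measurableSet_lt measurable_const hwm
      have hgt : (fun t => g (t, s)) = ({t : ℝ | s < w t}).indicator f := by
        funext t
        simp only [hg, hA, Set.indicator_apply, Set.mem_setOf_eq]
        by_cases h : s < w t <;> simp [h, hs]
      rw [hgt, integral_indicator hTs, hμ, Measure.restrict_restrict hTs]
      set B : Set ℝ := {t : ℝ | s < w t} ∩ Ioc 0 1 with hB
      rcases eq_empty_or_nonempty B with hBe | hBne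
      · rw [hBe]; simp
      · have hbdd : BddAbove B := bddAbove_Ioc.mono inter_subset_right
        set cs : ℝ := sSup B with hcs
        have hc1 : cs ≤ 1 := csSup_le hBne (fun b hb => hb.2.2)
        have hc0 : 0 < cs := by
          obtain ⟨b, hb⟩ := hBne
          exact lt_of_lt_of_le hb.2.1 (le_csSup hbdd hb)
        have hsub1 : Ioo (0:ℝ) cs ⊆ B := by
          intro t ht
          obtain ⟨b, hbB, htb⟩ := exists_lt_of_lt_csSup hBne ht.2
          exact ⟨lt_of_lt_of_le hbB.1 (hw (le_of_lt htb)), ht.1,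
            le_trans (le_of_lt htb) hbB.2.2⟩
        have hsub2 : B ⊆ Ioc (0:ℝ) cs := fun b hb => ⟨hb.2.1, le_csSup hbdd hb⟩
        have hae : B =ᵐ[volume] Ioc (0:ℝ) cs := by
          rw [MeasureTheory.ae_eq_set]
          constructor
          · exact measure_mono_null (fun x hx => absurd (hsub2 hx.1) hx.2)
              (OuterMeasureClass.measure_empty volume)
          · refine measure_mono_null (t := ({cs} : Set ℝ)) ?_ Real.volume_singleton
            intro x hx
            rcases eq_or_ne x cs with h | h
            · exact h
            · exact absurd (hsub1 ⟨hx.1.1, lt_of_le_of_ne hx.1.2 h⟩) hx.2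
        rw [setIntegral_congr_set hae]
        exact hF cs ⟨le_of_lt hc0, hc1⟩
    · have hz : (fun t => g (t, s)) = fun _ => 0 := by
        funext t
        apply Set.indicator_of_notMem
        intro h
        exact hs h.1
      rw [hz]
      simp
  rw [hswap] at hleft
  rw [← hleft]
  exact hright

/-- if the prior `H` is a mean-preserving spread of the signal CDF
`G` on `[0,1]`, then `∫₀¹ (1−G)² ≥ ∫₀¹ (1−H)²`: the expected minimum of two
i.i.d. draws (the revenue of a second-price auction with no reserve) is
minimized by full revelation `G = H`. -/
theorem stmt15 (G H : ℝ → ℝ)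
    (hGmono : MonotoneOn G (Set.Icc (0:ℝ) 1))
    (hHmono : MonotoneOn H (Set.Icc (0:ℝ) 1))
    (hGrc : ∀ x ∈ Set.Ico (0:ℝ) 1, ContinuousWithinAt G (Set.Ici x) x)
    (hHrc : ∀ x ∈ Set.Ico (0:ℝ) 1, ContinuousWithinAt H (Set.Ici x) x)
    (hGrange : ∀ x ∈ Set.Icc (0:ℝ) 1, G x ∈ Set.Icc (0:ℝ) 1)
    (hHrange : ∀ x ∈ Set.Icc (0:ℝ) 1, H x ∈ Set.Icc (0:ℝ) 1)
    (hG1 : G 1 = 1) (hH1 : H 1 = 1)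
    (hMPS : ∀ x ∈ Set.Icc (0:ℝ) 1, 0 ≤ ∫ t in (0:ℝ)..x, (H t - G t))
    (hMean : (∫ t in (0:ℝ)..1, (H t - G t)) = 0) :
    (∫ x in (0:ℝ)..1, (1 - H x) ^ 2) ≤ (∫ x in (0:ℝ)..1, (1 - G x) ^ 2) := by
  set c : ℝ → ℝ := fun t => max 0 (min t 1) with hc
  have hcmono : Monotone c := fun a b hab =>
    max_le_max le_rfl (min_le_min hab le_rfl)
  have hcmem : ∀ t, c t ∈ Icc (0:ℝ) 1 := fun t =>
    ⟨le_max_left _ _, max_le zero_le_one (min_le_right _ _)⟩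
  have hcid : ∀ t ∈ Icc (0:ℝ) 1, c t = t := by
    intro t ht
    simp [hc, min_eq_left ht.2, max_eq_right ht.1]
  set G' : ℝ → ℝ := fun t => G (c t) with hG'
  set H' : ℝ → ℝ := fun t => H (c t) with hH'
  have hG'mono : Monotone G' := fun a b hab => hGmono (hcmem a) (hcmem b) (hcmono hab)
  have hH'mono : Monotone H' := fun a b hab => hHmono (hcmem a) (hcmem b) (hcmono hab)
  have hG'r : ∀ t, G' t ∈ Icc (0:ℝ) 1 := fun t => hGrange _ (hcmem t)
  have hH'r : ∀ t, H' t ∈ Icc (0:ℝ) 1 := fun t => hHrange _ (hcmem t)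
  set f : ℝ → ℝ := fun t => H' t - G' t with hfdef
  set w : ℝ → ℝ := fun t => (1 - G' t) + (1 - H' t) with hwdef
  have hfmeas : Measurable f := hH'mono.measurable.sub hG'mono.measurable
  have hfb : ∀ t, |f t| ≤ 1 := by
    intro t
    have h1 := hG'r t; have h2 := hH'r t
    rw [abs_le]
    constructor
    · simp only [hfdef]; linarith [h1.2, h2.1]
    · simp only [hfdef]; linarith [h1.1, h2.2]
  have hwanti : Antitone w := by
    intro a b hab
    have h1 := hG'mono hab; have h2 := hH'mono hab
    simp only [hwdef]
    linarith
  have hw0 : ∀ t, 0 ≤ w t := by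
    intro t
    have h1 := (hG'r t).2; have h2 := (hH'r t).2
    simp only [hwdef]; linarith
  have hFrun : ∀ x ∈ Icc (0:ℝ) 1, 0 ≤ ∫ t in Ioc (0:ℝ) x, f t := by
    intro x hx
    have heq : (∫ t in Ioc (0:ℝ) x, f t) = ∫ t in (0:ℝ)..x, (H t - G t) := by
      rw [intervalIntegral.integral_of_le hx.1]
      apply setIntegral_congr_fun measurableSet_Ioc
      intro t ht
      have htI : t ∈ Icc (0:ℝ) 1 := ⟨le_of_lt ht.1, le_trans ht.2 hx.2⟩
      simp only [hfdef, hG', hH', hcid t htI]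
    rw [heq]
    exact hMPS x hx
  have hkey := key_nonneg f w hfmeas hfb hwanti hw0 hFrun
  have hGint : IntegrableOn (fun x => (1 - G' x) ^ 2) (Ioc (0:ℝ) 1) := by
    refine Integrable.mono' (g := fun _ => (1:ℝ)) (integrable_const _) ?_ ?_
    · exact ((measurable_const.sub hG'mono.measurable).pow_const 2).aestronglyMeasurable
    · refine Filter.Eventually.of_forall (fun t => ?_)
      have h := hG'r t
      rw [Real.norm_eq_abs, abs_of_nonneg (sq_nonneg _)]
      show (1 - G' t) ^ 2 ≤ 1
      nlinarith [h.1, h.2]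
  have hHint : IntegrableOn (fun x => (1 - H' x) ^ 2) (Ioc (0:ℝ) 1) := by
    refine Integrable.mono' (g := fun _ => (1:ℝ)) (integrable_const _) ?_ ?_
    · exact ((measurable_const.sub hH'mono.measurable).pow_const 2).aestronglyMeasurable
    · refine Filter.Eventually.of_forall (fun t => ?_)
      have h := hH'r t
      rw [Real.norm_eq_abs, abs_of_nonneg (sq_nonneg _)]
      show (1 - H' t) ^ 2 ≤ 1
      nlinarith [h.1, h.2]
  have hGeq : (∫ x in (0:ℝ)..1, (1 - G x) ^ 2) = ∫ x in Ioc (0:ℝ) 1, (1 - G' x) ^ 2 := by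
    rw [intervalIntegral.integral_of_le zero_le_one]
    apply setIntegral_congr_fun measurableSet_Ioc
    intro t ht
    have htI : t ∈ Icc (0:ℝ) 1 := ⟨le_of_lt ht.1, ht.2⟩
    simp only [hG', hcid t htI]
  have hHeq : (∫ x in (0:ℝ)..1, (1 - H x) ^ 2) = ∫ x in Ioc (0:ℝ) 1, (1 - H' x) ^ 2 := by
    rw [intervalIntegral.integral_of_le zero_le_one]
    apply setIntegral_congr_fun measurableSet_Ioc
    intro t ht
    have htI : t ∈ Icc (0:ℝ) 1 := ⟨le_of_lt ht.1, ht.2⟩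
    simp only [hH', hcid t htI]
  rw [hGeq, hHeq, ← sub_nonneg, ← integral_sub hGint hHint]
  have hring : (∫ x in Ioc (0:ℝ) 1, ((1 - G' x) ^ 2 - (1 - H' x) ^ 2))
      = ∫ t in Ioc (0:ℝ) 1, f t * w t := by
    apply setIntegral_congr_fun measurableSet_Ioc
    intro t _
    simp only [hfdef, hwdef]
    ring
  rw [hring]
  exact hkey
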